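/- Let w be a Kreweras word of length 3n and let 1 ≤ i ≤ 3n with w_i = A. Then w_{σ_w(i)} ∈ {B, C}, i.e., the letter of w in position σ_w(i) is not A. -/

import Mathlib

/-- The three letters of a Kreweras word. -/
inductive KLetter : Type
  | A | B | C
deriving DecidableEq, Repr

open KLetter

/-- `w` is a Kreweras word of length `3 * n`: it has `n` `A`'s, `n` `B`'s, `n` `C`'s,
and every prefix has at least as many `A`'s as `B`'s and at least as many `A`'s as `C`'s. -/
def IsKrewerasWord (n : ℕ) (w : List KLetter) : Prop :=
  w.length = 3 * n ∧ w.count A = n ∧ w.count B = n ∧ w.count C = n ∧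
  ∀ k : ℕ, (w.take k).count B ≤ (w.take k).count A ∧
           (w.take k).count C ≤ (w.take k).count A

/-- `kiota w` is the smallest index `ι ≥ 1` (1-indexed) such that the prefix of
length `ι` of `w` has equally many `A`'s as `B`'s, or equally many `A`'s as `C`'s
(and `0` if no such index exists). -/
def kiota (w : List KLetter) : ℕ :=
  (((List.range (w.length + 1)).filter fun k =>
      decide (1 ≤ k) &&
      (((w.take k).count A == (w.take k).count B) ||
       ((w.take k).count A == (w.take k).count C))).headD 0)

/-- Promotion of a Kreweras word:
`pro w = (w₂, …, w_{ι-1}, A, w_{ι+1}, …, w_{3n}, w_ι)` where `ι = kiota w`. -/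
def pro (w : List KLetter) : List KLetter :=
  ((w.drop 1).set (kiota w - 2) A) ++ [w.getD (kiota w - 1) A]

/-- The trip permutation `σ_w` of a Kreweras word of length `3 * n`, as a function on
1-indexed positions: `σ_w i` is the unique element of `{1, …, 3n}` congruent to
`kiota (pro^[i-1] w) + i - 1` modulo `3 * n`. -/
def ksigma (n : ℕ) (w : List KLetter) (i : ℕ) : ℕ :=
  (kiota (pro^[i - 1] w) + i - 2) % (3 * n) + 1

/-- `keps w i` is the letter of `pro^[i-1] w` in (1-indexed) position `kiota (pro^[i-1] w)`. -/
def keps (w : List KLetter) (i : ℕ) : KLetter :=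
  (pro^[i - 1] w).getD (kiota (pro^[i - 1] w) - 1) A

/-- The negation swapping `B` and `C` (and fixing `A`). -/
def negL : KLetter → KLetter
  | A => A
  | B => C
  | C => B

open Classical in
/-- The involution `τ_i` on Kreweras words of length `3 * n`: swap the letters in
(1-indexed) positions `i` and `i + 1` if the result is again a Kreweras word,
and otherwise do nothing. -/
noncomputable def tau (n i : ℕ) (w : List KLetter) : List KLetter :=
  let w' := (w.set (i - 1) (w.getD i A)).set i (w.getD (i - 1) A)
  if IsKrewerasWord n w' then w' else w

/-- `tauDown n j = τ_j ∘ τ_{j-1} ∘ ⋯ ∘ τ_1`. -/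
noncomputable def tauDown (n : ℕ) : ℕ → List KLetter → List KLetter
  | 0, w => w
  | j + 1, w => tau n (j + 1) (tauDown n j w)

/-- `evacAux n j = (tauDown n 1) ∘ (tauDown n 2) ∘ ⋯ ∘ (tauDown n j)`. -/
noncomputable def evacAux (n : ℕ) : ℕ → List KLetter → List KLetter
  | 0, w => w
  | j + 1, w => evacAux n j (tauDown n (j + 1) w)

/-- Evacuation on Kreweras words of length `3 * n`:
`evac = (τ_1) ∘ (τ_2 ∘ τ_1) ∘ ⋯ ∘ (τ_{3n-1} ∘ ⋯ ∘ τ_2 ∘ τ_1)`. -/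
noncomputable def evac (n : ℕ) (w : List KLetter) : List KLetter :=
  evacAux n (3 * n - 1) w

/-- `tauAsc n k c = τ_{k+c-1} ∘ ⋯ ∘ τ_{k+1} ∘ τ_k`. -/
noncomputable def tauAsc (n k : ℕ) : ℕ → List KLetter → List KLetter
  | 0, w => w
  | j + 1, w => tau n (k + j) (tauAsc n k j w)

/-- `evacStarAux n j = (tauAsc n 1 (3n-1)) ∘ (tauAsc n 2 (3n-2)) ∘ ⋯ ∘ (tauAsc n j (3n-j))`. -/
noncomputable def evacStarAux (n : ℕ) : ℕ → List KLetter → List KLetter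
  | 0, w => w
  | j + 1, w => evacStarAux n j (tauAsc n (j + 1) (3 * n - (j + 1)) w)

/-- Dual evacuation on Kreweras words of length `3 * n`:
`evac* = (τ_{3n-1} ∘ ⋯ ∘ τ_1) ∘ (τ_{3n-1} ∘ ⋯ ∘ τ_2) ∘ ⋯ ∘ (τ_{3n-1})`. -/
noncomputable def evacStar (n : ℕ) (w : List KLetter) : List KLetter :=
  evacStarAux n (3 * n - 1) w

/-- The three-element "V"-shaped poset: `a < b`, `a < c`, with `b`, `c` incomparable. -/
inductive VP : Type
  | a | b | c
deriving DecidableEq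

instance : PartialOrder VP where
  le x y := x = y ∨ x = VP.a
  le_refl x := Or.inl rfl
  le_trans x y z hxy hyz := by
    rcases hxy with rfl | rfl
    · exact hyz
    · exact Or.inr rfl
  le_antisymm x y hxy hyx := by
    rcases hxy with rfl | rfl
    · rfl
    · rcases hyx with rfl | rfl <;> rfl

/-- The labeling of elements of `V(n) = VP × Fin n` by letters. -/
def vlabel {n : ℕ} (p : VP × Fin n) : KLetter :=
  match p.1 with
  | VP.a => A
  | VP.b => B
  | VP.c => C

/-- `L` is a linear extension of `V(n) = VP × Fin n` (with the product order):
a list of all elements of `V(n)`, each appearing once, such that `L_i ≤ L_j`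
implies `i ≤ j`. -/
def IsLinearExtension (n : ℕ) (L : List (VP × Fin n)) : Prop :=
  L.Nodup ∧ (∀ p : VP × Fin n, p ∈ L) ∧
  ∀ i j : Fin L.length, L.get i ≤ L.get j → (i : ℕ) ≤ (j : ℕ)

/-- A connected Kreweras word: a Kreweras word of length `3 * n` having no proper
nonempty consecutive substring which is itself a Kreweras word. -/
def ConnectedKrewerasWord (n : ℕ) (w : List KLetter) : Prop :=
  IsKrewerasWord n w ∧
  ∀ (u : List KLetter) (m : ℕ), u <:+: w → u ≠ [] → u ≠ w → ¬ IsKrewerasWord m u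

namespace KrewAux

/-- Integer count of letter `x` in the length-`t` prefix of `w`. -/
def cz (x : KLetter) (w : List KLetter) (t : ℕ) : ℤ := ((w.take t).count x : ℤ)

/-- Height of the A-B lattice path after `t` letters. -/
def hB (w : List KLetter) (t : ℕ) : ℤ := cz A w t - cz B w t

/-- Height of the A-C lattice path after `t` letters. -/
def hC (w : List KLetter) (t : ℕ) : ℤ := cz A w t - cz C w t

/-- The condition defining the trip target: at `s`, one of the heights is
below its value at `i`. -/
def kcond (w : List KLetter) (i s : ℕ) : Prop := hB w s < hB w i ∨ hC w s < hC w i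

instance (w : List KLetter) (i s : ℕ) : Decidable (kcond w i s) := by
  unfold kcond; infer_instance

/-- `t` is the first position after `i` where a height drops below its value at `i`. -/
def KSpec (w : List KLetter) (i t : ℕ) : Prop :=
  i < t ∧ t ≤ w.length ∧ kcond w i t ∧ ∀ s, i < s → s < t → ¬ kcond w i s

lemma cz_zero (x : KLetter) (w : List KLetter) : cz x w 0 = 0 := by simp [cz]

lemma hB_zero (w : List KLetter) : hB w 0 = 0 := by simp [hB, cz_zero]
lemma hC_zero (w : List KLetter) : hC w 0 = 0 := by simp [hC, cz_zero]

lemma cz_succ (x : KLetter) (w : List KLetter) (t : ℕ) (h : t < w.length) :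
    cz x w (t + 1) = cz x w t + (if w.getD t A = x then 1 else 0) := by
  have h1 : w.take (t + 1) = w.take t ++ [w[t]] := by
    rw [List.take_succ, List.getElem?_eq_getElem h]
    rfl
  rw [cz, cz, h1, List.count_append, List.getD_eq_getElem _ _ h]
  by_cases hx : w[t] = x <;> simp [hx, List.count_singleton]

lemma cz_of_le (x : KLetter) (w : List KLetter) (t : ℕ) (h : w.length ≤ t) :
    cz x w t = cz x w w.length := by
  rw [cz, cz, List.take_of_length_le h, List.take_of_length_le le_rfl]

lemma hB_succ (w : List KLetter) (t : ℕ) (h : t < w.length) :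
    hB w (t + 1) = hB w t + (if w.getD t A = A then 1 else 0)
      - (if w.getD t A = B then 1 else 0) := by
  unfold hB; rw [cz_succ A w t h, cz_succ B w t h]; ring

lemma hC_succ (w : List KLetter) (t : ℕ) (h : t < w.length) :
    hC w (t + 1) = hC w t + (if w.getD t A = A then 1 else 0)
      - (if w.getD t A = C then 1 else 0) := by
  unfold hC; rw [cz_succ A w t h, cz_succ C w t h]; ring

lemma h_nonneg {n : ℕ} {w : List KLetter} (hw : IsKrewerasWord n w) (t : ℕ) :
    0 ≤ hB w t ∧ 0 ≤ hC w t := by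
  obtain ⟨-, -, -, -, h⟩ := hw
  have h1 := (h t).1
  have h2 := (h t).2
  unfold hB hC cz
  omega

lemma h_len {n : ℕ} {w : List KLetter} (hw : IsKrewerasWord n w) :
    hB w w.length = 0 ∧ hC w w.length = 0 := by
  obtain ⟨-, hA, hBc, hCc, -⟩ := hw
  unfold hB hC cz
  rw [List.take_length, hA, hBc, hCc]
  omega

lemma first_A {n : ℕ} {w : List KLetter} (hw : IsKrewerasWord n w) (hn : 1 ≤ n) :
    w.getD 0 A = A := by
  have h0 : 0 < w.length := by rw [hw.1]; omega
  have hb := hB_succ w 0 h0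
  have hc := hC_succ w 0 h0
  have hzb := hB_zero w
  have hzc := hC_zero w
  have hnb := h_nonneg hw 1
  cases hx : w.getD 0 A
  · rfl
  · exfalso; rw [hx] at hb; simp at hb; omega
  · exfalso; rw [hx] at hc; simp at hc; omega

lemma h_one {n : ℕ} {w : List KLetter} (hw : IsKrewerasWord n w) (hn : 1 ≤ n) :
    hB w 1 = 1 ∧ hC w 1 = 1 := by
  have h0 : 0 < w.length := by rw [hw.1]; omega
  have hb := hB_succ w 0 h0
  have hc := hC_succ w 0 h0
  rw [first_A hw hn] at hb hc
  simp at hb hc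
  rw [hB_zero] at hb; rw [hC_zero] at hc
  omega

/-! ### Characterizing `kiota` -/

/-- The defining property of `kiota`. -/
def KP (w : List KLetter) (k : ℕ) : Prop :=
  1 ≤ k ∧ ((w.take k).count A = (w.take k).count B ∨
           (w.take k).count A = (w.take k).count C)

instance (w : List KLetter) (k : ℕ) : Decidable (KP w k) := by
  unfold KP; infer_instance

lemma KP_iff (w : List KLetter) (k : ℕ) :
    KP w k ↔ (1 ≤ k ∧ (hB w k = 0 ∨ hC w k = 0)) := by
  unfold KP hB hC cz
  omega

lemma headD_filter_range (p : ℕ → Bool) (N k₀ : ℕ) (hk : k₀ ≤ N)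
    (hp : p k₀ = true) (hmin : ∀ j, j < k₀ → p j = false) :
    (((List.range (N + 1)).filter p).headD 0) = k₀ := by
  have hsplit : N + 1 = k₀ + (N + 1 - k₀) := by omega
  rw [hsplit, List.range_add, List.filter_append]
  have h1 : (List.range k₀).filter p = [] := by
    apply List.filter_eq_nil_iff.mpr
    intro a ha
    rw [List.mem_range] at ha
    simp [hmin a ha]
  rw [h1, List.nil_append]
  have h2 : N + 1 - k₀ = (N - k₀) + 1 := by omega
  rw [h2, List.range_succ_eq_map, List.map_cons, List.filter_cons]
  simp only [Nat.add_zero, hp]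
  rfl

lemma kiota_eq_find (w : List KLetter) (hP : ∃ k, KP w k) (hwit : KP w w.length) :
    kiota w = Nat.find hP := by
  have hk : Nat.find hP ≤ w.length := Nat.find_min' hP hwit
  unfold kiota
  apply headD_filter_range _ _ _ hk
  · have hs := Nat.find_spec hP
    unfold KP at hs
    simp only [Bool.and_eq_true, decide_eq_true_eq, Bool.or_eq_true, beq_iff_eq]
    tauto
  · intro j hj
    have hs := Nat.find_min hP hj
    unfold KP at hs
    rw [← Bool.not_eq_true]
    intro hcon
    simp only [Bool.and_eq_true, decide_eq_true_eq, Bool.or_eq_true, beq_iff_eq] at hcon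
    exact hs hcon

lemma kiota_facts {n : ℕ} {w : List KLetter} (hw : IsKrewerasWord n w) (hn : 1 ≤ n) :
    2 ≤ kiota w ∧ kiota w ≤ w.length ∧
      (hB w (kiota w) = 0 ∨ hC w (kiota w) = 0) ∧
      ∀ j, 1 ≤ j → j < kiota w → hB w j ≠ 0 ∧ hC w j ≠ 0 := by
  have hwit : KP w w.length := by
    refine ⟨by rw [hw.1]; omega, Or.inl ?_⟩
    rw [List.take_length, hw.2.1, hw.2.2.1]
  have hP : ∃ k, KP w k := ⟨_, hwit⟩
  have heq := kiota_eq_find w hP hwit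
  have hspec : KP w (kiota w) := by rw [heq]; exact Nat.find_spec hP
  have hmin : ∀ j, j < kiota w → ¬ KP w j := by
    intro j hj; rw [heq] at hj; exact Nat.find_min hP hj
  rw [KP_iff] at hspec
  have h1 := h_one hw hn
  have hne1 : kiota w ≠ 1 := by
    intro h; rw [h] at hspec; omega
  refine ⟨by omega, by rw [heq]; exact Nat.find_min' hP hwit, hspec.2, ?_⟩
  intro j hj1 hj2
  have := hmin j hj2
  rw [KP_iff] at this
  have hnn := h_nonneg hw j
  constructor <;> · intro hcon; exact this ⟨hj1, by omega⟩

lemma kiota_letter {n : ℕ} {w : List KLetter} (hw : IsKrewerasWord n w) (hn : 1 ≤ n) :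
    (w.getD (kiota w - 1) A = B ∧ hB w (kiota w) = 0) ∨
    (w.getD (kiota w - 1) A = C ∧ hC w (kiota w) = 0) := by
  obtain ⟨h2, hle, hzero, hmin⟩ := kiota_facts hw hn
  have hlt : kiota w - 1 < w.length := by omega
  have hsB := hB_succ w (kiota w - 1) hlt
  have hsC := hC_succ w (kiota w - 1) hlt
  rw [show kiota w - 1 + 1 = kiota w by omega] at hsB hsC
  have hprev := hmin (kiota w - 1) (by omega) (by omega)
  have hnn := h_nonneg hw (kiota w - 1)
  rcases hzero with h0 | h0
  · left
    refine ⟨?_, h0⟩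
    cases hx : w.getD (kiota w - 1) A
    · exfalso; rw [hx] at hsB; simp at hsB; omega
    · rfl
    · exfalso; rw [hx] at hsB; simp at hsB; omega
  · right
    refine ⟨?_, h0⟩
    cases hx : w.getD (kiota w - 1) A
    · exfalso; rw [hx] at hsC; simp at hsC; omega
    · exfalso; rw [hx] at hsC; simp at hsC; omega
    · rfl

lemma kiota_letter_ne_A {n : ℕ} {w : List KLetter} (hw : IsKrewerasWord n w) (hn : 1 ≤ n) :
    w.getD (kiota w - 1) A ≠ A := by
  rcases kiota_letter hw hn with ⟨h, -⟩ | ⟨h, -⟩ <;>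
    · intro hcon; rw [h] at hcon; exact KLetter.noConfusion hcon

/-! ### Promotion lemmas -/

lemma pro_length {n : ℕ} {w : List KLetter} (hw : IsKrewerasWord n w) (hn : 1 ≤ n) :
    (pro w).length = w.length := by
  have h3 : 3 ≤ w.length := by rw [hw.1]; omega
  unfold pro
  rw [List.length_append, List.length_set, List.length_drop]
  simp
  omega

lemma pro_take {n : ℕ} {w : List KLetter} (hw : IsKrewerasWord n w) (hn : 1 ≤ n)
    (t : ℕ) (h : t ≤ w.length - 1) :
    (pro w).take t = ((w.take (t + 1)).drop 1).set (kiota w - 2) A := by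
  have h3 : 3 ≤ w.length := by rw [hw.1]; omega
  unfold pro
  rw [List.take_append_of_le_length
    (by rw [List.length_set, List.length_drop]; omega)]
  rw [List.take_set]
  congr 1
  rw [List.drop_take]
  norm_num

lemma cz_tail {n : ℕ} {w : List KLetter} (hw : IsKrewerasWord n w) (hn : 1 ≤ n)
    (t : ℕ) (h : t + 1 ≤ w.length) (x : KLetter) :
    ((((w.take (t + 1)).drop 1).count x : ℤ)) = cz x w (t + 1) - (if A = x then 1 else 0) := by
  have h3 : 3 ≤ w.length := by rw [hw.1]; omega
  have hc : cz x w (t + 1) =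
      (((w.take (t + 1)).take 1).count x : ℤ) + (((w.take (t + 1)).drop 1).count x : ℤ) := by
    conv_lhs => rw [cz, ← List.take_append_drop 1 (w.take (t + 1))]
    rw [List.count_append]
    push_cast
    ring
  have h1 : (w.take (t + 1)).take 1 = w.take 1 := by
    rw [List.take_take]
    norm_num
  have h2 : ((w.take 1).count x : ℤ) = if A = x then 1 else 0 := by
    have h0 : 0 < w.length := by omega
    have hs := cz_succ x w 0 h0
    rw [cz_zero, first_A hw hn] at hs
    rw [← cz]
    rw [show (0 + 1 : ℕ) = 1 from rfl] at hs
    rw [hs]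
    ring
  rw [h1, h2] at hc
  omega

lemma cz_pro_low {n : ℕ} {w : List KLetter} (hw : IsKrewerasWord n w) (hn : 1 ≤ n)
    (t : ℕ) (h1 : t ≤ kiota w - 2) (h2 : t ≤ w.length - 1) (x : KLetter) :
    cz x (pro w) t = cz x w (t + 1) - (if A = x then 1 else 0) := by
  have h3 : 3 ≤ w.length := by rw [hw.1]; omega
  rw [cz, pro_take hw hn t h2]
  rw [List.set_eq_of_length_le
    (by rw [List.length_drop, List.length_take]; omega)]
  exact cz_tail hw hn t (by omega) x

lemma cz_pro_mid {n : ℕ} {w : List KLetter} (hw : IsKrewerasWord n w) (hn : 1 ≤ n)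
    (t : ℕ) (h1 : kiota w - 1 ≤ t) (h2 : t ≤ w.length - 1) (x : KLetter) :
    cz x (pro w) t = cz x w (t + 1) - (if w.getD (kiota w - 1) A = x then 1 else 0) := by
  have h3 : 3 ≤ w.length := by rw [hw.1]; omega
  obtain ⟨hι2, hιN, -, -⟩ := kiota_facts hw hn
  rw [cz, pro_take hw hn t h2]
  have hlen : (kiota w - 2) < ((w.take (t + 1)).drop 1).length := by
    rw [List.length_drop, List.length_take]; omega
  rw [List.count_set (a := A) (b := x) hlen]
  have hel : ((w.take (t + 1)).drop 1)[kiota w - 2]'hlen = w.getD (kiota w - 1) A := by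
    rw [List.getElem_drop, List.getElem_take]
    rw [List.getD_eq_getElem _ _ (by omega : kiota w - 1 < w.length)]
    simp only [show 1 + (kiota w - 2) = kiota w - 1 by omega]
  rw [hel]
  have htail := cz_tail hw hn t (by omega) x
  have hXA : w.getD (kiota w - 1) A ≠ A := kiota_letter_ne_A hw hn
  by_cases hib : w.getD (kiota w - 1) A = x
  · have hax : A ≠ x := fun hh => hXA (hib.trans hh.symm)
    have hmem : x ∈ (w.take (t + 1)).drop 1 := by
      rw [← hib, ← hel]; exact List.getElem_mem _
    have hpos : 1 ≤ ((w.take (t + 1)).drop 1).count x := List.count_pos_iff.mpr hmem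
    simp only [hib, beq_self_eq_true, if_true, beq_iff_eq, if_neg hax, if_pos rfl]
    rw [if_neg hax] at htail
    omega
  · simp only [beq_iff_eq, if_neg hib]
    by_cases hax : A = x
    · simp only [if_pos hax]
      rw [if_pos hax] at htail
      push_cast
      omega
    · simp only [if_neg hax]
      rw [if_neg hax] at htail
      push_cast
      omega
lemma pro_getD_last {n : ℕ} {w : List KLetter} (hw : IsKrewerasWord n w) (hn : 1 ≤ n) :
    (pro w).getD (w.length - 1) A = w.getD (kiota w - 1) A := by
  have h3 : 3 ≤ w.length := by rw [hw.1]; omega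
  unfold pro
  rw [List.getD_append_right _ _ _ _
    (by rw [List.length_set, List.length_drop])]
  rw [List.length_set, List.length_drop]
  simp

lemma cz_pro_len {n : ℕ} {w : List KLetter} (hw : IsKrewerasWord n w) (hn : 1 ≤ n)
    (x : KLetter) : cz x (pro w) w.length = cz x w w.length := by
  have h3 : 3 ≤ w.length := by rw [hw.1]; omega
  obtain ⟨hι2, hιN, -, -⟩ := kiota_facts hw hn
  have hlp : (pro w).length = w.length := pro_length hw hn
  have h1 : w.length - 1 < (pro w).length := by omega
  have hs := cz_succ x (pro w) (w.length - 1) h1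
  rw [show w.length - 1 + 1 = w.length by omega] at hs
  rw [hs, cz_pro_mid hw hn (w.length - 1) (by omega) (by omega) x,
    pro_getD_last hw hn]
  rw [show w.length - 1 + 1 = w.length by omega]
  ring

lemma pro_getD_mid {n : ℕ} {w : List KLetter} (hw : IsKrewerasWord n w) (hn : 1 ≤ n)
    (j : ℕ) (hj1 : 1 ≤ j) (hj2 : j ≤ w.length - 1) (hjι : j + 1 ≠ kiota w) :
    (pro w).getD (j - 1) A = w.getD j A := by
  have h3 : 3 ≤ w.length := by rw [hw.1]; omega
  obtain ⟨hι2, hιN, -, -⟩ := kiota_facts hw hn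
  unfold pro
  rw [List.getD_append _ _ _ _
    (by rw [List.length_set, List.length_drop]; omega)]
  rw [List.getD_eq_getElem _ _
    (by rw [List.length_set, List.length_drop]; omega)]
  rw [List.getElem_set_ne (by omega : kiota w - 2 ≠ j - 1)]
  rw [List.getElem_drop]
  rw [List.getD_eq_getElem _ _ (by omega : j < w.length)]
  simp only [show 1 + (j - 1) = j by omega]

/-! ### Zone formulas for the heights under promotion -/

lemma h_pro_low {n : ℕ} {w : List KLetter} (hw : IsKrewerasWord n w) (hn : 1 ≤ n)
    (t : ℕ) (h1 : t ≤ kiota w - 2) (h2 : t ≤ w.length - 1) :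
    hB (pro w) t = hB w (t + 1) - 1 ∧ hC (pro w) t = hC w (t + 1) - 1 := by
  unfold hB hC
  rw [cz_pro_low hw hn t h1 h2 A, cz_pro_low hw hn t h1 h2 B,
    cz_pro_low hw hn t h1 h2 C]
  simp
  constructor <;> ring

lemma h_pro_mid {n : ℕ} {w : List KLetter} (hw : IsKrewerasWord n w) (hn : 1 ≤ n)
    (t : ℕ) (h1 : kiota w - 1 ≤ t) (h2 : t ≤ w.length - 1) :
    hB (pro w) t = hB w (t + 1) + (if w.getD (kiota w - 1) A = B then 1 else 0) ∧
    hC (pro w) t = hC w (t + 1) + (if w.getD (kiota w - 1) A = C then 1 else 0) := by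
  have hXA : w.getD (kiota w - 1) A ≠ A := kiota_letter_ne_A hw hn
  unfold hB hC
  rw [cz_pro_mid hw hn t h1 h2 A, cz_pro_mid hw hn t h1 h2 B,
    cz_pro_mid hw hn t h1 h2 C]
  rw [if_neg hXA]
  constructor <;> ring

lemma pro_h_nonneg {n : ℕ} {w : List KLetter} (hw : IsKrewerasWord n w) (hn : 1 ≤ n)
    (k : ℕ) : 0 ≤ hB (pro w) k ∧ 0 ≤ hC (pro w) k := by
  have h3 : 3 ≤ w.length := by rw [hw.1]; omega
  obtain ⟨hι2, hιN, hιzero, hιmin⟩ := kiota_facts hw hn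
  have hlp : (pro w).length = w.length := pro_length hw hn
  rcases Nat.eq_zero_or_pos k with rfl | hk0
  · rw [hB_zero, hC_zero]; omega
  rcases Nat.lt_or_ge k w.length with hkN | hkN
  · rcases Nat.lt_or_ge k (kiota w - 1) with hzone | hzone
    · have hz := h_pro_low hw hn k (by omega) (by omega)
      have hmin := hιmin (k + 1) (by omega) (by omega)
      have hnn := h_nonneg hw (k + 1)
      omega
    · have hz := h_pro_mid hw hn k (by omega) (by omega)
      have hnn := h_nonneg hw (k + 1)
      rcases hz with ⟨hzB, hzC⟩
      constructor
      · rw [hzB]; split_ifs <;> omega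
      · rw [hzC]; split_ifs <;> omega
  · have hB' : hB (pro w) k = hB (pro w) w.length := by
      unfold hB
      rw [cz_of_le A _ _ (by omega : (pro w).length ≤ k),
        cz_of_le B _ _ (by omega : (pro w).length ≤ k), hlp]
    have hC' : hC (pro w) k = hC (pro w) w.length := by
      unfold hC
      rw [cz_of_le A _ _ (by omega : (pro w).length ≤ k),
        cz_of_le C _ _ (by omega : (pro w).length ≤ k), hlp]
    have h4 := cz_pro_len hw hn A
    have h5 := cz_pro_len hw hn B
    have h6 := cz_pro_len hw hn C
    have h7 := h_len hw
    unfold hB hC at *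
    omega

lemma pro_krew {n : ℕ} {w : List KLetter} (hw : IsKrewerasWord n w) (hn : 1 ≤ n) :
    IsKrewerasWord n (pro w) := by
  have hlp : (pro w).length = w.length := pro_length hw hn
  have hcnt : ∀ x : KLetter, (pro w).count x = w.count x := by
    intro x
    have := cz_pro_len hw hn x
    unfold cz at this
    rw [List.take_of_length_le (le_of_eq hlp), List.take_length] at this
    exact_mod_cast this
  refine ⟨by rw [hlp, hw.1], by rw [hcnt A, hw.2.1], by rw [hcnt B, hw.2.2.1],
    by rw [hcnt C, hw.2.2.2.1], ?_⟩
  intro k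
  have := pro_h_nonneg hw hn k
  unfold hB hC cz at this
  omega

lemma krew_iter {n : ℕ} {w : List KLetter} (hw : IsKrewerasWord n w) (hn : 1 ≤ n) :
    ∀ k, IsKrewerasWord n (pro^[k] w) := by
  intro k
  induction k with
  | zero => exact hw
  | succ k ih =>
    rw [Function.iterate_succ_apply']
    exact pro_krew ih hn
/-! ### The shift lemma: promotion shifts the trip target by one -/

lemma shift {n : ℕ} {w : List KLetter} (hw : IsKrewerasWord n w) (hn : 1 ≤ n)
    (i t : ℕ) (hi : 2 ≤ i) (hi2 : i ≤ w.length) (hA : w.getD (i - 1) A = A)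
    (ht : KSpec w i t) : KSpec (pro w) (i - 1) (t - 1) := by
  obtain ⟨hit, htN, hcond, hmin⟩ := ht
  obtain ⟨hι2, hιN, hιzero, hιmin⟩ := kiota_facts hw hn
  have h3 : 3 ≤ w.length := by rw [hw.1]; omega
  have hlp := pro_length hw hn
  have hXA : w.getD (kiota w - 1) A ≠ A := kiota_letter_ne_A hw hn
  have hiι : i ≠ kiota w := by
    intro h; rw [← h] at hXA; exact hXA hA
  have hstep : hB w i = hB w (i - 1) + 1 ∧ hC w i = hC w (i - 1) + 1 := by
    have h' : i - 1 < w.length := by omega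
    have b := hB_succ w (i - 1) h'
    have c := hC_succ w (i - 1) h'
    rw [show i - 1 + 1 = i by omega, hA] at b c
    simp at b c
    exact ⟨b, c⟩
  have hnn0 := h_nonneg hw (i - 1)
  have hBi : 1 ≤ hB w i := by omega
  have hCi : 1 ≤ hC w i := by omega
  rcases Nat.lt_or_ge i (kiota w) with hlt | hge
  · -- `i < kiota w` : everything happens in the low zone
    have hprev := hιmin (i - 1) (by omega) (by omega)
    have hBi2 : 2 ≤ hB w i := by omega
    have hCi2 : 2 ≤ hC w i := by omega
    have htι : t ≤ kiota w - 1 := by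
      by_contra hcon
      push_neg at hcon
      have hcι : kcond w i (kiota w) := by
        rcases hιzero with h0 | h0
        · exact Or.inl (by omega)
        · exact Or.inr (by omega)
      have hteq : t = kiota w := by
        by_contra hne
        exact hmin (kiota w) hlt (by omega) hcι
      have hup : 2 ≤ hB w (kiota w - 1) ∧ 2 ≤ hC w (kiota w - 1) := by
        rcases eq_or_lt_of_le (show i ≤ kiota w - 1 by omega) with he | hlt2
        · rw [← he]; exact ⟨hBi2, hCi2⟩
        · have hnc := hmin (kiota w - 1) hlt2 (by omega)
          unfold kcond at hnc
          push_neg at hnc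
          omega
      have hsb := hB_succ w (kiota w - 1) (by omega : kiota w - 1 < w.length)
      have hsc := hC_succ w (kiota w - 1) (by omega : kiota w - 1 < w.length)
      rw [show kiota w - 1 + 1 = kiota w by omega] at hsb hsc
      rcases hιzero with h0 | h0
      · rw [hsb] at h0; split_ifs at h0 <;> omega
      · rw [hsc] at h0; split_ifs at h0 <;> omega
    have hth := h_pro_low hw hn (i - 1) (by omega) (by omega)
    rw [show i - 1 + 1 = i by omega] at hth
    refine ⟨by omega, by omega, ?_, ?_⟩
    · have hz := h_pro_low hw hn (t - 1) (by omega) (by omega)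
      rw [show t - 1 + 1 = t by omega] at hz
      unfold kcond at hcond ⊢
      rcases hcond with h | h
      · exact Or.inl (by omega)
      · exact Or.inr (by omega)
    · intro s hs1 hs2 hcon
      have hz := h_pro_low hw hn s (by omega) (by omega)
      apply hmin (s + 1) (by omega) (by omega)
      unfold kcond at hcon ⊢
      rcases hcon with h | h
      · exact Or.inl (by omega)
      · exact Or.inr (by omega)
  · -- `kiota w < i` : mid zone
    have hgt : kiota w < i := lt_of_le_of_ne hge (Ne.symm hiι)
    rcases kiota_letter hw hn with ⟨hX, -⟩ | ⟨hX, -⟩ <;>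
    · have hth := h_pro_mid hw hn (i - 1) (by omega) (by omega)
      rw [show i - 1 + 1 = i by omega, hX] at hth
      simp at hth
      have hzt := h_pro_mid hw hn (t - 1) (by omega) (by omega)
      rw [show t - 1 + 1 = t by omega, hX] at hzt
      simp at hzt
      refine ⟨by omega, by omega, ?_, ?_⟩
      · unfold kcond at hcond ⊢
        rcases hcond with h | h
        · exact Or.inl (by omega)
        · exact Or.inr (by omega)
      · intro s hs1 hs2 hcon
        have hz := h_pro_mid hw hn s (by omega) (by omega)
        rw [hX] at hz
        simp at hz
        apply hmin (s + 1) (by omega) (by omega)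
        unfold kcond at hcon ⊢
        rcases hcon with h | h
        · exact Or.inl (by omega)
        · exact Or.inr (by omega)

/-! ### Main induction -/

lemma ksigma_eq_spec (n : ℕ) (hn : 1 ≤ n) :
    ∀ i w t, IsKrewerasWord n w → 1 ≤ i → i ≤ 3 * n → w.getD (i - 1) A = A →
      KSpec w i t → ksigma n w i = t := by
  intro i
  induction i with
  | zero => intro w t _ h1; exact absurd h1 (by omega)
  | succ i ih =>
    intro w t hw hi1 hi2 hA hsp
    obtain ⟨hι2, hιN, hιzero, hιmin⟩ := kiota_facts hw hn
    have hlen := hw.1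
    rcases Nat.eq_zero_or_pos i with rfl | hi0
    · -- base case `i + 1 = 1`
      simp only [Nat.zero_add] at hsp hA ⊢
      have h1 := h_one hw hn
      obtain ⟨h1t, htN, hcond, hmin⟩ := hsp
      have htι : t = kiota w := by
        have hc : kcond w 1 (kiota w) := by
          have hnn := h_nonneg hw (kiota w)
          rcases hιzero with h | h
          · exact Or.inl (by omega)
          · exact Or.inr (by omega)
        have hub : t ≤ kiota w := by
          by_contra hh
          push_neg at hh
          exact hmin _ (by omega) hh hc
        have hlb : kiota w ≤ t := by
          by_contra hh
          push_neg at hh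
          have hmm := hιmin t (by omega) hh
          have hnn := h_nonneg hw t
          unfold kcond at hcond
          omega
        omega
      show (kiota (pro^[1 - 1] w) + 1 - 2) % (3 * n) + 1 = t
      rw [show (1 : ℕ) - 1 = 0 from rfl, Function.iterate_zero_apply]
      rw [show kiota w + 1 - 2 = kiota w - 1 by omega]
      rw [Nat.mod_eq_of_lt (by omega : kiota w - 1 < 3 * n)]
      omega
    · -- inductive step
      have hi2' : i + 1 ≤ w.length := by omega
      have hXA : w.getD (kiota w - 1) A ≠ A := kiota_letter_ne_A hw hn
      have hAi : w.getD (i + 1 - 1) A = A := hA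
      have hi1ι : i + 1 ≠ kiota w := by
        intro h
        rw [show i + 1 - 1 = i from rfl] at hAi
        rw [show kiota w - 1 = i by omega] at hXA
        exact hXA hAi
      have hw' := pro_krew hw hn
      have hA' : (pro w).getD (i - 1) A = A := by
        rw [pro_getD_mid hw hn i (by omega) (by omega) hi1ι]
        exact hAi
      have hsp' : KSpec (pro w) i (t - 1) := by
        have := shift hw hn (i + 1) t (by omega) hi2' hAi hsp
        simpa using this
      have hrec := ih (pro w) (t - 1) hw' (by omega) (by omega) hA' hsp'
      obtain ⟨h1t, htN, -, -⟩ := hsp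
      have hκw : IsKrewerasWord n (pro^[i] w) := krew_iter hw hn i
      obtain ⟨hκ2, hκN, -, -⟩ := kiota_facts hκw hn
      unfold ksigma at hrec ⊢
      have hit : pro^[i - 1] (pro w) = pro^[i] w := by
        rw [← Function.iterate_succ_apply]
        congr 1
        omega
      rw [hit] at hrec
      rw [show i + 1 - 1 = i from rfl]
      have hx : kiota (pro^[i] w) + (i + 1) - 2 = (kiota (pro^[i] w) + i - 2) + 1 := by
        omega
      rw [hx, Nat.add_mod]
      rw [show (1 : ℕ) % (3 * n) = 1 from Nat.mod_eq_of_lt (by omega)]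
      generalize hG : (kiota (pro^[i] w) + i - 2) % (3 * n) = z at hrec ⊢
      have hzlt : z + 1 < 3 * n := by
        have hκl : (pro^[i] w).length = 3 * n := hκw.1
        omega
      rw [Nat.mod_eq_of_lt hzlt]
      omega

lemma spec_letter {n : ℕ} {w : List KLetter} (hw : IsKrewerasWord n w) (hn : 1 ≤ n)
    (i t : ℕ) (hi1 : 1 ≤ i) (hsp : KSpec w i t) :
    w.getD (t - 1) A = B ∨ w.getD (t - 1) A = C := by
  obtain ⟨hit, htN, hcond, hmin⟩ := hsp
  have ht1 : t - 1 < w.length := by omega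
  have hge : hB w i ≤ hB w (t - 1) ∧ hC w i ≤ hC w (t - 1) := by
    rcases eq_or_lt_of_le (show i ≤ t - 1 by omega) with he | hlt
    · rw [← he]; exact ⟨le_refl _, le_refl _⟩
    · have hnc := hmin (t - 1) hlt (by omega)
      unfold kcond at hnc
      push_neg at hnc
      omega
  have hb := hB_succ w (t - 1) ht1
  have hc := hC_succ w (t - 1) ht1
  rw [show t - 1 + 1 = t by omega] at hb hc
  rcases hcond with h | h
  · left
    cases hx : w.getD (t - 1) A
    · exfalso; rw [hx] at hb; simp at hb; omega
    · rfl
    · exfalso; rw [hx] at hb; simp at hb; omega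
  · right
    cases hx : w.getD (t - 1) A
    · exfalso; rw [hx] at hc; simp at hc; omega
    · exfalso; rw [hx] at hc; simp at hc; omega
    · rfl

end KrewAux
/-- If `w_i = A` then `w_{σ_w(i)} ∈ {B, C}` (letters are 1-indexed). -/
theorem ksigma_of_A (n : ℕ) (w : List KLetter) (hw : IsKrewerasWord n w)
    (i : ℕ) (hi1 : 1 ≤ i) (hi2 : i ≤ 3 * n)
    (hA : w.getD (i - 1) KLetter.A = KLetter.A) :
    w.getD (ksigma n w i - 1) KLetter.A = KLetter.B ∨
      w.getD (ksigma n w i - 1) KLetter.A = KLetter.C := by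
  have hn : 1 ≤ n := by omega
  have hlen := hw.1
  have hstep : KrewAux.hB w i = KrewAux.hB w (i - 1) + 1 ∧
      KrewAux.hC w i = KrewAux.hC w (i - 1) + 1 := by
    have h' : i - 1 < w.length := by omega
    have b := KrewAux.hB_succ w (i - 1) h'
    have c := KrewAux.hC_succ w (i - 1) h'
    rw [show i - 1 + 1 = i by omega, hA] at b c
    simp at b c
    exact ⟨b, c⟩
  have hnn := KrewAux.h_nonneg hw (i - 1)
  have hBi : 1 ≤ KrewAux.hB w i := by omega
  have hfull := KrewAux.h_len hw
  have hiN : i < w.length := by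
    rcases Nat.lt_or_ge i w.length with h | h
    · exact h
    · exfalso
      have : KrewAux.hB w i = KrewAux.hB w w.length := by
        unfold KrewAux.hB KrewAux.cz
        rw [List.take_of_length_le h, List.take_of_length_le le_rfl]
      omega
  have hex : ∃ t, i < t ∧ KrewAux.kcond w i t :=
    ⟨w.length, hiN, Or.inl (by omega)⟩
  set t₀ := Nat.find hex with ht₀
  have hsp : KrewAux.KSpec w i t₀ := by
    refine ⟨(Nat.find_spec hex).1, Nat.find_min' hex ⟨hiN, Or.inl (by omega)⟩,
      (Nat.find_spec hex).2, ?_⟩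
    intro s hs1 hs2 hc
    exact Nat.find_min hex hs2 ⟨hs1, hc⟩
  have hmain := KrewAux.ksigma_eq_spec n hn i w t₀ hw hi1 hi2 hA hsp
  rw [hmain]
  exact KrewAux.spec_letter hw hn i t₀ hi1 hsp
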